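/- arXiv:1805.08339 — 4 statements merged into one kernel-verified Lean document; each statement's English description precedes it below -/
import Mathlib

section
/- Fix w ∈ ℝ and let a_n, b_n → ∞ be sequences of positive reals, and define v_n by (1/a_n)(log a_n + w) = (1/b_n)(log b_n + v_n). If b_n - a_n = o(a_n / log a_n), then v_n - w → 0. Conversely, if for every w ∈ ℝ the corresponding v_n satisfies v_n - w → 0, then b_n - a_n = o(a_n / log a_n). -/
open Real Filter

/-- Key lemma for the Gumbel scaling: with `v w n` defined by
`(1/aₙ)(log aₙ + w) = (1/bₙ)(log bₙ + v w n)`, one has `v w n - w → 0` for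
every `w` if and only if `bₙ - aₙ = o(aₙ / log aₙ)`. -/
theorem gumbel_robustness (a b : ℕ → ℝ) (v : ℝ → ℕ → ℝ)
    (ha_pos : ∀ n, 0 < a n) (hb_pos : ∀ n, 0 < b n)
    (ha : Tendsto a atTop atTop) (hb : Tendsto b atTop atTop)
    (hv : ∀ (w : ℝ) (n : ℕ),
      (1 / a n) * (Real.log (a n) + w) = (1 / b n) * (Real.log (b n) + v w n)) :
    (Tendsto (fun n => (b n - a n) / (a n / Real.log (a n))) atTop (nhds 0))
      ↔ (∀ w : ℝ, Tendsto (fun n => v w n - w) atTop (nhds 0)) := by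
  have hvw : ∀ w n, v w n = b n / a n * (Real.log (a n) + w) - Real.log (b n) := by
    intro w n
    have h := hv w n
    have ha0 := (ha_pos n).ne'
    have hb0 := (hb_pos n).ne'
    field_simp at h ⊢
    linarith
  have hlog : ∀ᶠ n in atTop, 0 < Real.log (a n) := by
    filter_upwards [ha.eventually_ge_atTop 2] with n hn
    exact Real.log_pos (by linarith)
  constructor
  · intro hr w
    have hloga : Tendsto (fun n => Real.log (a n)) atTop atTop :=
      Real.tendsto_log_atTop.comp ha
    have hba : Tendsto (fun n => b n / a n - 1) atTop (nhds 0) := by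
      refine (hr.div_atTop hloga).congr' ?_
      filter_upwards [hlog] with n hn
      have ha0 := (ha_pos n).ne'
      field_simp
    have hba1 : Tendsto (fun n => b n / a n) atTop (nhds 1) := by
      have := hba.add_const 1
      simpa using this
    have hlogba : Tendsto (fun n => Real.log (b n / a n)) atTop (nhds 0) := by
      have := (Real.continuousAt_log one_ne_zero).tendsto.comp hba1
      simpa [Function.comp_def] using this
    have key : Tendsto (fun n => (b n - a n) / (a n / Real.log (a n))
        + (b n / a n - 1) * w - Real.log (b n / a n)) atTop (nhds 0) := by
      have := (hr.add (hba.mul_const w)).sub hlogba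
      simpa using this
    refine key.congr' ?_
    filter_upwards [hlog] with n hn
    rw [hvw, Real.log_div (hb_pos n).ne' (ha_pos n).ne']
    have ha0 := (ha_pos n).ne'
    have hn0 := hn.ne'
    field_simp
    ring
  · intro h
    have hba1 : Tendsto (fun n => b n / a n) atTop (nhds 1) := by
      have key : Tendsto (fun n => (v 1 n - 1) - (v 0 n - 0) + 1) atTop (nhds (0 - 0 + 1)) :=
        ((h 1).sub (h 0)).add_const 1
      have : Tendsto (fun n => (v 1 n - 1) - (v 0 n - 0) + 1) atTop (nhds 1) := by
        simpa using key
      refine this.congr fun n => ?_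
      rw [hvw, hvw]
      ring
    have hlogba : Tendsto (fun n => Real.log (b n / a n)) atTop (nhds 0) := by
      have := (Real.continuousAt_log one_ne_zero).tendsto.comp hba1
      simpa [Function.comp_def] using this
    have key : Tendsto (fun n => (v 0 n - 0) + Real.log (b n / a n)) atTop (nhds 0) := by
      have := (h 0).add hlogba
      simpa using this
    refine key.congr' ?_
    filter_upwards [hlog] with n hn
    rw [hvw, Real.log_div (hb_pos n).ne' (ha_pos n).ne']
    have ha0 := (ha_pos n).ne'
    have hn0 := hn.ne'
    field_simp
    ring
end

section
/- Define ρ_t = 1/(1 + 1/t) for t > 0 (extinction probability of a critical binary branching process from one individual by time t). Let Z₀ₙ → ∞, a_n = γ_n Z₀ₙ → a_∞ ∈ [0,∞) where γ_n ≥ 0, and fix w > 0. With ρ_t^{-1} = 1 + γ_n/(e^{γ_n t} - 1) (interpreted as 1 + 1/t when γ_n = 0), one has ρ_{wZ₀ₙ}^{Z₀ₙ} → e^{-1/w} if a_∞ = 0, and ρ_{wZ₀ₙ}^{Z₀ₙ} → exp(-a_∞/(e^{a_∞ w} - 1)) if a_∞ > 0. -/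
open Real Filter

lemma slope_log_one :
    Tendsto (fun h : ℝ => Real.log (1 + h) / h) (nhdsWithin 0 {0}ᶜ) (nhds 1) := by
  have h := Real.hasDerivAt_log (one_ne_zero)
  rw [hasDerivAt_iff_tendsto_slope] at h
  have hmap : Tendsto (fun h : ℝ => (1 : ℝ) + h) (nhdsWithin 0 {0}ᶜ)
      (nhdsWithin 1 {1}ᶜ) := by
    refine tendsto_nhdsWithin_of_tendsto_nhds_of_eventually_within _ ?_ ?_
    · have hcont : Continuous (fun h : ℝ => (1:ℝ) + h) := continuous_const.add continuous_id
      simpa using (hcont.tendsto 0).mono_left nhdsWithin_le_nhds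
    · filter_upwards [self_mem_nhdsWithin] with x hx
      simp only [Set.mem_compl_iff, Set.mem_singleton_iff] at hx ⊢
      intro hc; apply hx; linarith
  have := h.comp hmap
  simp only [inv_one] at this
  refine this.congr ?_
  intro x
  simp [slope, Real.log_one, Function.comp, div_eq_inv_mul]

lemma slope_exp (w : ℝ) (hw : w ≠ 0) :
    Tendsto (fun x : ℝ => x / (Real.exp (w * x) - 1)) (nhdsWithin 0 {0}ᶜ) (nhds (1 / w)) := by
  have h : HasDerivAt (fun x : ℝ => Real.exp (w * x)) w 0 := by
    simpa [Function.comp_def] using (Real.hasDerivAt_exp (w * 0)).comp 0 ((hasDerivAt_id 0).const_mul w)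
  rw [hasDerivAt_iff_tendsto_slope] at h
  have h2 := h.inv₀ hw
  rw [← one_div] at h2
  refine h2.congr ?_
  intro x
  simp only [slope, vsub_eq_sub, smul_eq_mul, sub_zero, mul_zero, Real.exp_zero]
  rw [mul_inv, inv_inv, div_eq_mul_inv]

lemma aux_pow (c : ℕ → ℝ) (Z : ℕ → ℕ) (L : ℝ)
    (hc : ∀ᶠ n in atTop, 0 < c n)
    (hZ : Tendsto (fun n => (Z n : ℝ)) atTop atTop)
    (hL : Tendsto (fun n => (Z n : ℝ) * c n) atTop (nhds L)) :
    Tendsto (fun n => ((1 + c n)⁻¹) ^ Z n) atTop (nhds (Real.exp (-L))) := by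
  have hc0 : Tendsto c atTop (nhds 0) := by
    have hZi : Tendsto (fun n => ((Z n : ℝ))⁻¹) atTop (nhds 0) := hZ.inv_tendsto_atTop
    have h := hL.mul hZi
    rw [mul_zero] at h
    refine h.congr' ?_
    filter_upwards [hZ.eventually_ge_atTop 1] with n hn
    have : (Z n : ℝ) ≠ 0 := by linarith
    field_simp
  have hcne : ∀ᶠ n in atTop, c n ≠ 0 := hc.mono fun n hn => ne_of_gt hn
  have hlog : Tendsto (fun n => Real.log (1 + c n) / c n) atTop (nhds 1) := by
    refine slope_log_one.comp ?_
    rw [tendsto_nhdsWithin_iff]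
    exact ⟨hc0, hcne.mono fun n hn => by simpa using hn⟩
  have hmain : Tendsto (fun n => (Z n : ℝ) * c n * (Real.log (1 + c n) / c n))
      atTop (nhds (L * 1)) := hL.mul hlog
  rw [mul_one] at hmain
  have := (Real.continuous_exp.tendsto (-L)).comp hmain.neg
  refine this.congr' ?_
  filter_upwards [hc] with n hn
  have h1 : (0:ℝ) < 1 + c n := by linarith
  have h2 : (Z n : ℝ) * c n * (Real.log (1 + c n) / c n) = (Z n : ℝ) * Real.log (1 + c n) := by
    field_simp
  simp only [Function.comp_apply]
  rw [h2, show -((Z n : ℝ) * Real.log (1 + c n)) = (Z n : ℝ) * Real.log ((1 + c n)⁻¹) by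
    rw [Real.log_inv]; ring]
  rw [Real.exp_nat_mul, Real.exp_log (inv_pos.mpr h1)]

noncomputable def gfun (w : ℝ) : ℝ → ℝ :=
  fun x => if x = 0 then 1 / w else x / (Real.exp (w * x) - 1)

lemma gfun_cont (w : ℝ) (hw : 0 < w) {b : ℝ} (hb : 0 ≤ b) :
    Tendsto (gfun w) (nhds b) (nhds (gfun w b)) := by
  rcases eq_or_lt_of_le hb with hb0 | hbpos
  · subst hb0
    rw [show gfun w 0 = 1 / w from if_pos rfl]
    rw [← nhdsNE_sup_pure 0, tendsto_sup]
    constructor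
    · refine (slope_exp w hw.ne').congr' ?_
      filter_upwards [self_mem_nhdsWithin] with x hx
      simp only [Set.mem_compl_iff, Set.mem_singleton_iff] at hx
      simp [gfun, hx]
    · simpa [gfun] using tendsto_pure_nhds (gfun w) 0
  · have hden : Real.exp (w * b) - 1 ≠ 0 := by
      have : 1 < Real.exp (w * b) := by
        rw [← Real.exp_zero]
        exact Real.exp_lt_exp.mpr (by positivity)
      linarith
    have hcont : ContinuousAt (fun x : ℝ => x / (Real.exp (w * x) - 1)) b := by
      exact continuousAt_id.div (((Real.continuous_exp.comp (continuous_const.mul continuous_id)).continuousAt).sub continuousAt_const) hden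
    have heq : (fun x : ℝ => x / (Real.exp (w * x) - 1)) =ᶠ[nhds b] gfun w := by
      filter_upwards [eventually_ne_nhds (ne_of_gt hbpos)] with x hx
      simp [gfun, hx]
    have : gfun w b = b / (Real.exp (w * b) - 1) := by
      simp [gfun, (ne_of_gt hbpos)]
    rw [this]
    exact hcont.tendsto.congr' heq

/-- Rescaled extinction-time law of a (sub)critical binary branching process:
`ρ n t` is the extinction probability by time `t` of a single line, with
`ρ_t⁻¹ = 1 + γ/(e^{γt} - 1)`, interpreted as `1 + 1/t` when `γ = 0`. -/
theorem bbp_rescaled_extinction (γ : ℕ → ℝ) (Z₀ : ℕ → ℕ) (a : ℕ → ℝ) (aInf w : ℝ)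
    (hγ : ∀ n, 0 ≤ γ n)
    (hZ₀ : Tendsto (fun n => (Z₀ n : ℝ)) atTop atTop)
    (ha : ∀ n, a n = γ n * (Z₀ n : ℝ))
    (haInf : Tendsto a atTop (nhds aInf)) (haInf0 : 0 ≤ aInf)
    (hw : 0 < w)
    (ρ : ℕ → ℝ → ℝ)
    (hρ : ∀ n t, ρ n t =
      (if γ n = 0 then 1 + 1 / t else 1 + γ n / (Real.exp (γ n * t) - 1))⁻¹) :
    (aInf = 0 →
      Tendsto (fun n => ρ n (w * (Z₀ n : ℝ)) ^ (Z₀ n)) atTop (nhds (Real.exp (-1 / w)))) ∧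
    (0 < aInf →
      Tendsto (fun n => ρ n (w * (Z₀ n : ℝ)) ^ (Z₀ n)) atTop
        (nhds (Real.exp (-aInf / (Real.exp (aInf * w) - 1))))) := by
  set c : ℕ → ℝ := fun n =>
    if γ n = 0 then 1 / (w * (Z₀ n : ℝ)) else γ n / (Real.exp (γ n * (w * (Z₀ n : ℝ))) - 1)
    with hc_def
  have hρc : ∀ n, ρ n (w * (Z₀ n : ℝ)) = (1 + c n)⁻¹ := by
    intro n
    rw [hρ, hc_def]
    by_cases h : γ n = 0 <;> simp [h]
  have hZ1 : ∀ᶠ n in atTop, (1:ℝ) ≤ (Z₀ n : ℝ) := hZ₀.eventually_ge_atTop 1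
  have hcpos : ∀ᶠ n in atTop, 0 < c n := by
    filter_upwards [hZ1] with n hn
    rw [hc_def]
    by_cases h : γ n = 0
    · have hZpos : (0:ℝ) < (Z₀ n : ℝ) := by linarith
      simp only [h, if_pos]
      exact div_pos one_pos (mul_pos hw hZpos)
    · have hγp : 0 < γ n := lt_of_le_of_ne (hγ n) (Ne.symm h)
      have hZpos : (0:ℝ) < (Z₀ n : ℝ) := by linarith
      simp only [h, if_false]
      have harg : 0 < γ n * (w * (Z₀ n : ℝ)) := mul_pos hγp (mul_pos hw hZpos)
      have : 1 < Real.exp (γ n * (w * (Z₀ n : ℝ))) := by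
        rw [← Real.exp_zero]; exact Real.exp_lt_exp.mpr harg
      exact div_pos hγp (by linarith)
  have hZc : ∀ᶠ n in atTop, (Z₀ n : ℝ) * c n = gfun w (a n) := by
    filter_upwards [hZ1] with n hn
    have hZne : (Z₀ n : ℝ) ≠ 0 := by linarith
    rw [hc_def]
    by_cases h : γ n = 0
    · have han : a n = 0 := by rw [ha n, h, zero_mul]
      simp only [h, if_pos, gfun, han, if_pos rfl]
      field_simp
    · have hγp : 0 < γ n := lt_of_le_of_ne (hγ n) (Ne.symm h)
      have hZpos : (0:ℝ) < (Z₀ n : ℝ) := by linarith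
      have han : a n ≠ 0 := by
        rw [ha n]; exact ne_of_gt (mul_pos hγp hZpos)
      simp only [h, if_neg, if_false, gfun, han, ha n]
      rw [show γ n * (w * (Z₀ n : ℝ)) = w * (γ n * (Z₀ n : ℝ)) by ring]
      rw [if_neg (mul_pos hγp hZpos).ne']
      field_simp
  have hL : Tendsto (fun n => (Z₀ n : ℝ) * c n) atTop (nhds (gfun w aInf)) :=
    ((gfun_cont w hw haInf0).comp haInf).congr' (hZc.mono fun n hn => hn.symm)
  have hkey : Tendsto (fun n => ρ n (w * (Z₀ n : ℝ)) ^ (Z₀ n)) atTop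
      (nhds (Real.exp (-(gfun w aInf)))) := by
    refine (aux_pow c Z₀ _ hcpos hZ₀ hL).congr fun n => ?_
    rw [hρc]
  constructor
  · intro h0
    subst h0
    have : gfun w 0 = 1 / w := if_pos rfl
    rw [this] at hkey
    convert hkey using 2
    ring_nf
  · intro hpos
    have : gfun w aInf = aInf / (Real.exp (w * aInf) - 1) := if_neg (ne_of_gt hpos)
    rw [this] at hkey
    convert hkey using 3
    rw [neg_div, mul_comm]
end

section
/- Let γ_n ∈ (0,1), Z₀ₙ → ∞ with a_n = γ_n Z₀ₙ → ∞, and fix w ∈ ℝ. Define t_n = γ_n⁻¹(log a_n + w) and ρ_t^{-1} = 1 + γ_n/(e^{γ_n t} - 1). Then ρ_{t_n}^{Z₀ₙ} → exp(-e^{-w}) as n → ∞. -/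
open Real Filter

lemma log_one_add_div_self_tendsto :
    Tendsto (fun x : ℝ => Real.log (1 + x) / x) (nhdsWithin 0 {0}ᶜ) (nhds 1) := by
  have h := hasDerivAt_iff_tendsto_slope.mp (Real.hasDerivAt_log one_ne_zero)
  rw [inv_one] at h
  have hmap : Tendsto (fun x : ℝ => 1 + x) (nhdsWithin 0 {0}ᶜ) (nhdsWithin 1 {1}ᶜ) := by
    apply tendsto_nhdsWithin_of_tendsto_nhds_of_eventually_within
    · exact ((continuous_const.add continuous_id).tendsto' 0 1 (by norm_num)).mono_left
        nhdsWithin_le_nhds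
    · filter_upwards [self_mem_nhdsWithin] with x hx
      simp only [Set.mem_compl_iff, Set.mem_singleton_iff] at hx ⊢
      intro h'; apply hx; linarith
  have hcomp := h.comp hmap
  refine hcomp.congr fun x => ?_
  simp [slope_def_field, Real.log_one, add_sub_cancel_left]

/-- Gumbel limit for the subcritical binary branching process extinction time. -/
theorem bbp_gumbel_limit (γ : ℕ → ℝ) (Z₀ : ℕ → ℕ) (a t : ℕ → ℝ) (w : ℝ)
    (hγ0 : ∀ n, 0 < γ n) (hγ1 : ∀ n, γ n < 1)
    (hZ₀ : Tendsto (fun n => (Z₀ n : ℝ)) atTop atTop)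
    (ha : ∀ n, a n = γ n * (Z₀ n : ℝ))
    (hatop : Tendsto a atTop atTop)
    (ht : ∀ n, t n = (γ n)⁻¹ * (Real.log (a n) + w))
    (ρ : ℕ → ℝ → ℝ)
    (hρ : ∀ n s, ρ n s = (1 + γ n / (Real.exp (γ n * s) - 1))⁻¹) :
    Tendsto (fun n => ρ n (t n) ^ (Z₀ n)) atTop (nhds (Real.exp (-Real.exp (-w)))) := by
  set x : ℕ → ℝ := fun n => γ n / (a n * Real.exp w - 1) with hx
  have hE : ∀ᶠ n in atTop, 2 * Real.exp (-w) ≤ a n := hatop.eventually_ge_atTop _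
  have hE' : ∀ᶠ n in atTop, 1 ≤ a n * Real.exp w - 1 ∧ 0 < a n := by
    filter_upwards [hE] with n hn
    have h1 := Real.exp_pos w
    have h2 := Real.exp_pos (-w)
    have h3 : Real.exp (-w) * Real.exp w = 1 := by
      rw [← Real.exp_add]; simp
    constructor
    · nlinarith
    · nlinarith
  have hdtop : Tendsto (fun n => a n * Real.exp w - 1) atTop atTop := by
    have := (hatop.atTop_mul_const (Real.exp_pos w)).atTop_add
      (tendsto_const_nhds (x := (-1 : ℝ)))
    simpa [sub_eq_add_neg] using this
  have hx0 : Tendsto x atTop (nhds 0) := by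
    apply squeeze_zero' (g := fun n => (a n * Real.exp w - 1)⁻¹)
    · filter_upwards [hE'] with n hn
      exact div_nonneg (hγ0 n).le (by linarith [hn.1])
    · filter_upwards [hE'] with n hn
      rw [inv_eq_one_div]
      calc x n = γ n / (a n * Real.exp w - 1) := rfl
        _ ≤ 1 / (a n * Real.exp w - 1) := by
            gcongr
            · linarith [hn.1]
            · exact (hγ1 n).le
    · exact hdtop.inv_tendsto_atTop
  have hxne : ∀ᶠ n in atTop, 0 < x n := by
    filter_upwards [hE'] with n hn
    exact div_pos (hγ0 n) (by linarith [hn.1])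
  have hxW : Tendsto x atTop (nhdsWithin 0 {0}ᶜ) := by
    apply tendsto_nhdsWithin_of_tendsto_nhds_of_eventually_within _ hx0
    filter_upwards [hxne] with n hn
    simp only [Set.mem_compl_iff, Set.mem_singleton_iff]
    exact hn.ne'
  have hratio : Tendsto (fun n => Real.log (1 + x n) / x n) atTop (nhds 1) :=
    log_one_add_div_self_tendsto.comp hxW
  have hfac : Tendsto (fun n => x n * (Z₀ n : ℝ)) atTop (nhds (Real.exp (-w))) := by
    have hden : Tendsto (fun n => Real.exp w - (a n)⁻¹) atTop (nhds (Real.exp w)) := by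
      simpa using (tendsto_const_nhds (x := Real.exp w)).sub hatop.inv_tendsto_atTop
    have h1 : Tendsto (fun n => 1 / (Real.exp w - (a n)⁻¹)) atTop
        (nhds (Real.exp (-w))) := by
      have h2 := (tendsto_const_nhds (x := (1 : ℝ))).div hden (Real.exp_pos w).ne'
      rw [Real.exp_neg, inv_eq_one_div]
      exact h2
    refine h1.congr' ?_
    filter_upwards [hE'] with n hn
    have haz : a n ≠ 0 := hn.2.ne'
    have hdz : a n * Real.exp w - 1 ≠ 0 := by linarith [hn.1]
    have hZ : γ n * (Z₀ n : ℝ) = a n := (ha n).symm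
    have hne : Real.exp w - (a n)⁻¹ = (a n * Real.exp w - 1) / a n := by
      field_simp
    calc 1 / (Real.exp w - (a n)⁻¹) = a n / (a n * Real.exp w - 1) := by
          rw [hne, one_div_div]
      _ = x n * (Z₀ n : ℝ) := by
          show _ = γ n / (a n * Real.exp w - 1) * (Z₀ n : ℝ)
          rw [div_mul_eq_mul_div, hZ]
  have hc : Tendsto (fun n => (Z₀ n : ℝ) * Real.log (1 + x n)) atTop
      (nhds (Real.exp (-w))) := by
    have hm := hfac.mul hratio
    rw [mul_one] at hm
    refine hm.congr' ?_
    filter_upwards [hxne] with n hn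
    field_simp
  have hlim : Tendsto (fun n => Real.exp (-((Z₀ n : ℝ) * Real.log (1 + x n)))) atTop
      (nhds (Real.exp (-Real.exp (-w)))) := (Real.continuous_exp.tendsto _).comp hc.neg
  refine hlim.congr' ?_
  filter_upwards [hE', hxne] with n hn hxn
  have hap : 0 < a n := hn.2
  have hxpos : 0 < 1 + x n := by linarith
  have h1 : γ n * t n = Real.log (a n) + w := by
    rw [ht, ← mul_assoc, mul_inv_cancel₀ (hγ0 n).ne', one_mul]
  have h2 : Real.exp (γ n * t n) = a n * Real.exp w := by
    rw [h1, Real.exp_add, Real.exp_log hap]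
  have hρ' : ρ n (t n) = (1 + x n)⁻¹ := by
    rw [hρ, h2]
  rw [hρ']
  have h3 : (1 + x n)⁻¹ ^ Z₀ n = Real.exp (Real.log ((1 + x n)⁻¹)) ^ Z₀ n := by
    rw [Real.exp_log (inv_pos.mpr hxpos)]
  rw [h3, ← Real.exp_nat_mul, Real.log_inv]
  congr 1
  ring
end

section
/- Let p_n : [0,∞) → [0,1] be nonincreasing with p_n(t+s) ≤ p_n(t)p_n(s), ∫_0^∞ p_n = 1, and suppose additionally that p_n(t+s) ≥ p_n(t)p_n(s) - ε_n uniformly in s,t with ε_n → 0. Then for every t ≥ 0, p_n(t) - p_n(1)^t → 0 as n → ∞, and p_n(1) → 1/e; consequently p_n(t) → e^{-t} for every t ≥ 0. -/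
open MeasureTheory Filter Real Topology

section Aux

variable {f : ℝ → ℝ}

/-- Integrability from the integral being 1. -/
lemma aux_integrable (hi : ∫ t in Set.Ioi (0:ℝ), f t = 1) :
    IntegrableOn f (Set.Ioi (0:ℝ)) := by
  by_contra hc
  rw [MeasureTheory.integral_undef hc] at hi
  norm_num at hi

lemma aux_intervalIntegrable (hi : ∫ t in Set.Ioi (0:ℝ), f t = 1)
    {a b : ℝ} (ha : 0 ≤ a) (hab : a ≤ b) : IntervalIntegrable f volume a b := by
  rw [intervalIntegrable_iff_integrableOn_Ioc_of_le hab]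
  exact (aux_integrable hi).mono_set (fun x hx => lt_of_le_of_lt ha hx.1)

/-- The truncated integral is at most 1. -/
lemma aux_trunc_le_one
    (hr : ∀ t ≥ (0:ℝ), f t ∈ Set.Icc (0:ℝ) 1)
    (hi : ∫ t in Set.Ioi (0:ℝ), f t = 1) {T : ℝ} (hT : 0 ≤ T) :
    ∫ x in (0:ℝ)..T, f x ≤ 1 := by
  rw [intervalIntegral.integral_of_le hT]
  rw [← hi]
  refine setIntegral_mono_set (aux_integrable hi) ?_ ?_
  · exact ae_restrict_of_forall_mem measurableSet_Ioi (fun x hx => (hr x hx.le).1)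
  · exact (Set.Ioc_subset_Ioi_self).eventuallyLE

/-- Bounds for the integral over `[a,b]` by the endpoint values, using antitonicity. -/
lemma aux_seg_upper
    (hm : AntitoneOn f (Set.Ici (0:ℝ)))
    (hi : ∫ t in Set.Ioi (0:ℝ), f t = 1)
    {a b : ℝ} (ha : 0 ≤ a) (hab : a ≤ b) :
    ∫ x in a..b, f x ≤ (b - a) * f a := by
  have := intervalIntegral.integral_mono_on hab (aux_intervalIntegrable hi ha hab)
    (intervalIntegrable_const (c := f a))
    (fun x hx => hm (Set.mem_Ici.2 ha) (Set.mem_Ici.2 (ha.trans hx.1)) hx.1)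
  simpa [smul_eq_mul] using this

lemma aux_seg_lower
    (hm : AntitoneOn f (Set.Ici (0:ℝ)))
    (hi : ∫ t in Set.Ioi (0:ℝ), f t = 1)
    {a b : ℝ} (ha : 0 ≤ a) (hab : a ≤ b) :
    (b - a) * f b ≤ ∫ x in a..b, f x := by
  have := intervalIntegral.integral_mono_on hab
    (intervalIntegrable_const (c := f b)) (aux_intervalIntegrable hi ha hab)
    (fun x hx => hm (Set.mem_Ici.2 (ha.trans hx.1)) (Set.mem_Ici.2 (ha.trans hab)) hx.2)
  simpa [smul_eq_mul] using this

/-- Shifted integral identity. -/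
lemma aux_shift (hi : ∫ t in Set.Ioi (0:ℝ), f t = 1) {h T : ℝ} (hh : 0 ≤ h) (hT : 0 ≤ T) :
    ∫ x in (0:ℝ)..T, f (x + h)
      = (∫ x in (0:ℝ)..(T + h), f x) - ∫ x in (0:ℝ)..h, f x := by
  rw [intervalIntegral.integral_comp_add_right f h, zero_add]
  have h2 : h ≤ T + h := by linarith
  have := intervalIntegral.integral_add_adjacent_intervals
    (aux_intervalIntegrable hi le_rfl hh)
    (aux_intervalIntegrable hi hh h2)
  linarith

/-- Key lower bound: `f h ≥ 1 - h` for `h > 0`. -/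
lemma aux_low
    (hr : ∀ t ≥ (0:ℝ), f t ∈ Set.Icc (0:ℝ) 1)
    (hm : AntitoneOn f (Set.Ici (0:ℝ)))
    (hs : ∀ s ≥ (0:ℝ), ∀ t ≥ (0:ℝ), f (t + s) ≤ f t * f s)
    (hi : ∫ t in Set.Ioi (0:ℝ), f t = 1)
    {h : ℝ} (hh : 0 < h) : 1 - h ≤ f h := by
  set I : ℝ → ℝ := fun T => ∫ x in (0:ℝ)..T, f x with hI
  have hfh0 : 0 ≤ f h := (hr h hh.le).1
  have key : ∀ T ≥ (0:ℝ), I (T + h) ≤ f h + h := by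
    intro T hT
    have step1 : ∫ x in (0:ℝ)..T, f (x + h) ≤ ∫ x in (0:ℝ)..T, f x * f h := by
      refine intervalIntegral.integral_mono_on hT ?_ ?_ ?_
      · have := (aux_intervalIntegrable hi hh.le
          (by linarith : h ≤ T + h)).comp_add_right h
        simpa using this
      · exact (aux_intervalIntegrable hi le_rfl hT).mul_const _
      · exact fun x hx => hs h hh.le x hx.1
    have step2 : ∫ x in (0:ℝ)..T, f x * f h = I T * f h := by
      rw [hI]; exact intervalIntegral.integral_mul_const _ _
    have step3 : ∫ x in (0:ℝ)..T, f (x + h) = I (T + h) - I h :=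
      aux_shift hi hh.le hT
    have step4 : I h ≤ h := by
      have := aux_seg_upper hm hi le_rfl hh.le
      have hf0 : f 0 ≤ 1 := (hr 0 le_rfl).2
      rw [hI]
      nlinarith
    have step5 : I T ≤ 1 := aux_trunc_le_one hr hi hT
    nlinarith
  have hIt : Tendsto (fun T => I (T + h)) atTop (𝓝 1) := by
    have h1 : Tendsto I atTop (𝓝 1) := by
      rw [hI, ← hi]
      exact intervalIntegral_tendsto_integral_Ioi 0 (aux_integrable hi) tendsto_id
    exact h1.comp (tendsto_atTop_add_const_right atTop h tendsto_id)
  have : (1:ℝ) ≤ f h + h :=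
    le_of_tendsto hIt ((eventually_ge_atTop (0:ℝ)).mono key)
  linarith

/-- Key upper bound: `f h ≤ 1 - h + h² + h/T + T e`. -/
lemma aux_up {e : ℝ}
    (hr : ∀ t ≥ (0:ℝ), f t ∈ Set.Icc (0:ℝ) 1)
    (hm : AntitoneOn f (Set.Ici (0:ℝ)))
    (hs : ∀ s ≥ (0:ℝ), ∀ t ≥ (0:ℝ), f (t + s) ≤ f t * f s)
    (hi : ∫ t in Set.Ioi (0:ℝ), f t = 1)
    (hl : ∀ s ≥ (0:ℝ), ∀ t ≥ (0:ℝ), f t * f s - e ≤ f (t + s))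
    {h T : ℝ} (hh : 0 < h) (hT : 1 ≤ T) :
    f h ≤ 1 - h + h ^ 2 + h / T + T * e := by
  set I : ℝ → ℝ := fun T => ∫ x in (0:ℝ)..T, f x with hI
  have hT0 : (0:ℝ) < T := by linarith
  have hfh0 : 0 ≤ f h := (hr h hh.le).1
  have hfh1 : f h ≤ 1 := (hr h hh.le).2
  have hfT0 : 0 ≤ f T := (hr T hT0.le).1
  have s1 : ∫ x in (0:ℝ)..T, (f x * f h - e) ≤ ∫ x in (0:ℝ)..T, f (x + h) := by
    refine intervalIntegral.integral_mono_on hT0.le ?_ ?_ ?_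
    · exact ((aux_intervalIntegrable hi le_rfl hT0.le).mul_const _).sub
        (intervalIntegrable_const)
    · have := (aux_intervalIntegrable hi hh.le
        (by linarith : h ≤ T + h)).comp_add_right h
      simpa using this
    · exact fun x hx => hl h hh.le x hx.1
  have s2 : ∫ x in (0:ℝ)..T, (f x * f h - e) = I T * f h - T * e := by
    rw [intervalIntegral.integral_sub
      ((aux_intervalIntegrable hi le_rfl hT0.le).mul_const _) intervalIntegrable_const,
      intervalIntegral.integral_mul_const, intervalIntegral.integral_const, hI]
    simp [smul_eq_mul]
  have s3 : ∫ x in (0:ℝ)..T, f (x + h) = I (T + h) - I h := aux_shift hi hh.le hT0.le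
  have s4 : I (T + h) ≤ I T + h * f T := by
    have hadd := intervalIntegral.integral_add_adjacent_intervals
      (aux_intervalIntegrable hi le_rfl hT0.le)
      (aux_intervalIntegrable hi hT0.le (by linarith : T ≤ T + h))
    have := aux_seg_upper hm hi hT0.le (by linarith : T ≤ T + h)
    rw [hI]; nlinarith
  have s5 : h * f h ≤ I h := by
    have := aux_seg_lower hm hi le_rfl hh.le
    rw [hI]; nlinarith
  have s6 : T * f T ≤ I T := by
    have := aux_seg_lower hm hi le_rfl hT0.le
    rw [hI]; nlinarith
  have s7 : I T ≤ 1 := aux_trunc_le_one hr hi hT0.le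
  have s8 : 1 - h ≤ f h := aux_low hr hm hs hi hh
  have s9 : 0 ≤ I T := le_trans (by positivity) s6
  -- combine
  have main : I T * f h - T * e ≤ I T + h * f T - h * f h := by linarith
  have hfT : f T ≤ 1 / T := by
    rw [le_div_iff₀ hT0]; nlinarith
  have h5 : h * f T ≤ h / T := by
    calc h * f T ≤ h * (1 / T) := mul_le_mul_of_nonneg_left hfT hh.le
    _ = h / T := by ring
  nlinarith [mul_nonneg (sub_nonneg.2 s7) (sub_nonneg.2 hfh1),
    mul_le_mul_of_nonneg_left s8 hh.le]

/-- `f 0 = 1`. -/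
lemma aux_f0
    (hr : ∀ t ≥ (0:ℝ), f t ∈ Set.Icc (0:ℝ) 1)
    (hm : AntitoneOn f (Set.Ici (0:ℝ)))
    (hs : ∀ s ≥ (0:ℝ), ∀ t ≥ (0:ℝ), f (t + s) ≤ f t * f s)
    (hi : ∫ t in Set.Ioi (0:ℝ), f t = 1) : f 0 = 1 := by
  have h1 : f 0 ≤ 1 := (hr 0 le_rfl).2
  have h2 : (1:ℝ) ≤ f 0 := by
    by_contra hc
    push_neg at hc
    set h := (1 - f 0) / 2 with hh
    have hhpos : 0 < h := by rw [hh]; linarith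
    have := aux_low hr hm hs hi hhpos
    have := hm (Set.mem_Ici.2 le_rfl) (Set.mem_Ici.2 hhpos.le) hhpos.le
    rw [hh] at *
    linarith
  linarith

/-- Submultiplicative power bound. -/
lemma aux_pow_up
    (hr : ∀ t ≥ (0:ℝ), f t ∈ Set.Icc (0:ℝ) 1)
    (hs : ∀ s ≥ (0:ℝ), ∀ t ≥ (0:ℝ), f (t + s) ≤ f t * f s)
    (hf0 : f 0 = 1) {h : ℝ} (hh : 0 ≤ h) (k : ℕ) :
    f (k * h) ≤ f h ^ k := by
  induction k with
  | zero => simp [hf0]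
  | succ k ih =>
    have hkh : (0:ℝ) ≤ k * h := by positivity
    have e1 : ((k + 1 : ℕ) : ℝ) * h = k * h + h := by push_cast; ring
    rw [e1, pow_succ]
    calc f (k * h + h) ≤ f (k * h) * f h := hs h hh _ hkh
    _ ≤ f h ^ k * f h := mul_le_mul_of_nonneg_right ih (hr h hh).1

/-- Approximately supermultiplicative power bound. -/
lemma aux_pow_low {e : ℝ}
    (hr : ∀ t ≥ (0:ℝ), f t ∈ Set.Icc (0:ℝ) 1)
    (hl : ∀ s ≥ (0:ℝ), ∀ t ≥ (0:ℝ), f t * f s - e ≤ f (t + s))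
    (hf0 : f 0 = 1) (he : 0 ≤ e) {h : ℝ} (hh : 0 ≤ h) (k : ℕ) :
    f h ^ k - k * e ≤ f (k * h) := by
  induction k with
  | zero => simp [hf0]
  | succ k ih =>
    have hkh : (0:ℝ) ≤ k * h := by positivity
    have e1 : ((k + 1 : ℕ) : ℝ) * h = k * h + h := by push_cast; ring
    have hfh0 : 0 ≤ f h := (hr h hh).1
    have hfh1 : f h ≤ 1 := (hr h hh).2
    have step : f (k * h) * f h - e ≤ f (k * h + h) := hl h hh _ hkh
    have step2 : (f h ^ k - k * e) * f h ≤ f (k * h) * f h :=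
      mul_le_mul_of_nonneg_right ih hfh0
    have hke : (0:ℝ) ≤ k * e := by positivity
    have e2 : k * e * f h ≤ k * e := by nlinarith
    rw [e1]
    push_cast
    nlinarith [pow_succ (f h) k]

/-- `exp (-(y)) ≤ 1 - h` when `y = h + 2h²`, `0 < h ≤ 1/3`. -/
lemma aux_exp_le {h : ℝ} (hh : 0 < h) (hh3 : h ≤ 1/3) :
    Real.exp (-(h + 2 * h ^ 2)) ≤ 1 - h := by
  have hea := Real.add_one_le_exp (h + 2 * h ^ 2)
  have hprod : Real.exp (-(h + 2 * h ^ 2)) * Real.exp (h + 2 * h ^ 2) = 1 := by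
    have hz : -(h + 2 * h ^ 2) + (h + 2 * h ^ 2) = 0 := by ring
    rw [← Real.exp_add, hz, Real.exp_zero]
  nlinarith [Real.exp_pos (h + 2 * h ^ 2), Real.exp_pos (-(h + 2 * h ^ 2))]

set_option maxHeartbeats 1000000 in
/-- The full per-`n` estimate. -/
lemma aux_estimate {e : ℝ}
    (hr : ∀ t ≥ (0:ℝ), f t ∈ Set.Icc (0:ℝ) 1)
    (hm : AntitoneOn f (Set.Ici (0:ℝ)))
    (hs : ∀ s ≥ (0:ℝ), ∀ t ≥ (0:ℝ), f (t + s) ≤ f t * f s)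
    (hi : ∫ t in Set.Ioi (0:ℝ), f t = 1)
    (hl : ∀ s ≥ (0:ℝ), ∀ t ≥ (0:ℝ), f t * f s - e ≤ f (t + s))
    (he : 0 ≤ e)
    {t : ℝ} (ht : 0 < t) {m : ℕ} (hm3 : 3 ≤ m) (hmt : 1 / (m:ℝ) ≤ t)
    (hem : e ≤ 1 / (m:ℝ) ^ 3) :
    f t ≤ Real.exp (-t + (3 * t + 1) / m) ∧
      Real.exp (-t - (2 * t + 3) / m) - (⌈t * m⌉₊ : ℝ) * e ≤ f t := by
  have hf0 : f 0 = 1 := aux_f0 hr hm hs hi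
  have hm0 : (0:ℝ) < m := by positivity
  set h : ℝ := 1 / (m:ℝ) with hhdef
  have hh : 0 < h := by positivity
  have hm3' : (3:ℝ) ≤ (m:ℝ) := by exact_mod_cast hm3
  have hh3 : h ≤ 1/3 := by
    rw [hhdef, div_le_div_iff₀ hm0 (by norm_num)]
    linarith
  have hmh : (m:ℝ) * h = 1 := by rw [hhdef]; field_simp
  have hfh0 : 0 ≤ f h := (hr h hh.le).1
  -- lower bound on f h
  have fh_low : 1 - h ≤ f h := aux_low hr hm hs hi hh
  -- upper bound on f h
  have fh_up : f h ≤ 1 - h + 3 * h ^ 2 := by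
    have := aux_up hr hm hs hi hl hh (T := (m:ℝ)) (by exact_mod_cast Nat.one_le_of_lt hm3)
    have e1 : h / (m:ℝ) = h ^ 2 := by rw [hhdef]; ring
    have e2 : (m:ℝ) * e ≤ h ^ 2 := by
      have : (m:ℝ) * e ≤ (m:ℝ) * (1 / (m:ℝ) ^ 3) := mul_le_mul_of_nonneg_left hem hm0.le
      calc (m:ℝ) * e ≤ (m:ℝ) * (1 / (m:ℝ) ^ 3) := this
      _ = h ^ 2 := by rw [hhdef]; field_simp
    linarith
  constructor
  · -- upper bound for f t
    set k : ℕ := ⌊t * m⌋₊ with hk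
    have hkle : (k:ℝ) ≤ t * m := Nat.floor_le (by positivity)
    have hkge : t * m - 1 < (k:ℝ) := Nat.sub_one_lt_floor _
    have hkh_le : (k:ℝ) * h ≤ t := by
      calc (k:ℝ) * h ≤ t * m * h := mul_le_mul_of_nonneg_right hkle hh.le
      _ = t := by rw [hhdef]; field_simp
    have hkh0 : (0:ℝ) ≤ (k:ℝ) * h := by positivity
    have step1 : f t ≤ f (k * h) :=
      hm (Set.mem_Ici.2 hkh0) (Set.mem_Ici.2 ht.le) hkh_le
    have step2 : f ((k:ℝ) * h) ≤ f h ^ k := aux_pow_up hr hs hf0 hh.le k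
    set b : ℝ := 1 - h + 3 * h ^ 2 with hb
    have hb_pos : 0 < b := by rw [hb]; nlinarith
    have step3 : f h ^ k ≤ b ^ k := pow_le_pow_left₀ hfh0 (by rw [hb]; linarith) k
    have hlogb : Real.log b ≤ -h + 3 * h ^ 2 := by
      have := Real.log_le_sub_one_of_pos hb_pos
      rw [hb] at this ⊢; linarith
    have hlb_neg : -h + 3 * h ^ 2 ≤ 0 := by nlinarith
    have step4 : b ^ k ≤ Real.exp (-t + (3 * t + 1) / m) := by
      have e1 : b ^ k = Real.exp ((k:ℝ) * Real.log b) := by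
        rw [Real.exp_nat_mul, Real.exp_log hb_pos]
      rw [e1, Real.exp_le_exp]
      have c1 : (k:ℝ) * Real.log b ≤ (k:ℝ) * (-h + 3 * h ^ 2) :=
        mul_le_mul_of_nonneg_left hlogb (by positivity)
      have c2 : (k:ℝ) * (-h + 3 * h ^ 2) ≤ (t * m - 1) * (-h + 3 * h ^ 2) :=
        mul_le_mul_of_nonpos_right hkge.le hlb_neg
      have c3 : (t * m - 1) * (-h + 3 * h ^ 2) ≤ -t + (3 * t + 1) / m := by
        have e2 : (3 * t + 1) / (m:ℝ) = (3 * t + 1) * h := by rw [hhdef]; ring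
        have q1 : t * m * h = t := by rw [hhdef]; field_simp
        have q2 : (t * m - 1) * (-h + 3 * h ^ 2)
            = -(t * m * h) + 3 * (t * m * h) * h + h - 3 * h ^ 2 := by ring
        rw [e2, q2, q1]
        nlinarith [sq_nonneg h, mul_pos ht hh]
      linarith
    calc f t ≤ f ((k:ℝ) * h) := step1
    _ ≤ f h ^ k := step2
    _ ≤ b ^ k := step3
    _ ≤ _ := step4
  · -- lower bound for f t
    set K : ℕ := ⌈t * m⌉₊ with hK
    have hKge : t * m ≤ (K:ℝ) := Nat.le_ceil _
    have hKle : (K:ℝ) < t * m + 1 := Nat.ceil_lt_add_one (by positivity)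
    have hKh_ge : t ≤ (K:ℝ) * h := by
      calc t = t * m * h := by rw [hhdef]; field_simp
      _ ≤ (K:ℝ) * h := mul_le_mul_of_nonneg_right hKge hh.le
    have step1 : f ((K:ℝ) * h) ≤ f t :=
      hm (Set.mem_Ici.2 ht.le) (Set.mem_Ici.2 (ht.le.trans hKh_ge)) hKh_ge
    have step2 : f h ^ K - K * e ≤ f ((K:ℝ) * h) := aux_pow_low hr hl hf0 he hh.le K
    have step3 : (1 - h) ^ K ≤ f h ^ K := pow_le_pow_left₀ (by linarith) fh_low K
    have step4 : Real.exp (-t - (2 * t + 3) / m) ≤ (1 - h) ^ K := by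
      have h1pos : (0:ℝ) < 1 - h := by linarith
      have e1 : (1 - h) ^ K = Real.exp ((K:ℝ) * Real.log (1 - h)) := by
        rw [Real.exp_nat_mul, Real.exp_log h1pos]
      rw [e1, Real.exp_le_exp]
      have hlog_low : -(h + 2 * h ^ 2) ≤ Real.log (1 - h) := by
        rw [Real.le_log_iff_exp_le h1pos]
        exact aux_exp_le hh hh3
      have hlog_np : Real.log (1 - h) ≤ 0 :=
        Real.log_nonpos (by linarith) (by linarith)
      have c1 : (t * m + 1) * Real.log (1 - h) ≤ (K:ℝ) * Real.log (1 - h) :=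
        mul_le_mul_of_nonpos_right hKle.le hlog_np
      have c2 : (t * m + 1) * (-(h + 2 * h ^ 2)) ≤ (t * m + 1) * Real.log (1 - h) :=
        mul_le_mul_of_nonneg_left hlog_low (by positivity)
      have c3 : -t - (2 * t + 3) / m ≤ (t * m + 1) * (-(h + 2 * h ^ 2)) := by
        have e2 : (2 * t + 3) / (m:ℝ) = (2 * t + 3) * h := by rw [hhdef]; ring
        have q1 : t * m * h = t := by rw [hhdef]; field_simp
        have q2 : (t * m + 1) * (-(h + 2 * h ^ 2))
            = -(t * m * h) - 2 * (t * m * h) * h - h - 2 * h ^ 2 := by ring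
        rw [e2, q2, q1]
        nlinarith [mul_pos ht hh]
      linarith
    have : Real.exp (-t - (2 * t + 3) / m) - K * e ≤ f ((K:ℝ) * h) := by
      have := step4.trans step3
      linarith
    linarith

end Aux

/-- Approximately multiplicative, nonincreasing, mean-one tails converge to the
exponential: `pₙ(t) - pₙ(1)^t → 0`, `pₙ(1) → 1/e`, hence `pₙ(t) → e^{-t}`. -/
theorem approx_multiplicative_exponential_limit (p : ℕ → ℝ → ℝ) (ε : ℕ → ℝ)
    (hrange : ∀ n, ∀ t ≥ (0:ℝ), p n t ∈ Set.Icc (0:ℝ) 1)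
    (hmono : ∀ n, AntitoneOn (p n) (Set.Ici (0:ℝ)))
    (hsub : ∀ n, ∀ s ≥ (0:ℝ), ∀ t ≥ (0:ℝ), p n (t + s) ≤ p n t * p n s)
    (hint : ∀ n, ∫ t in Set.Ioi (0:ℝ), p n t = 1)
    (hlow : ∀ n, ∀ s ≥ (0:ℝ), ∀ t ≥ (0:ℝ), p n t * p n s - ε n ≤ p n (t + s))
    (hε : Tendsto ε atTop (nhds 0)) :
    (∀ t ≥ (0:ℝ), Tendsto (fun n => p n t - (p n 1) ^ t) atTop (nhds 0)) ∧
    Tendsto (fun n => p n 1) atTop (nhds (Real.exp (-1))) ∧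
    (∀ t ≥ (0:ℝ), Tendsto (fun n => p n t) atTop (nhds (Real.exp (-t)))) := by
  have hf0 : ∀ n, p n 0 = 1 := fun n =>
    aux_f0 (hrange n) (hmono n) (hsub n) (hint n)
  have hε0 : ∀ n, 0 ≤ ε n := by
    intro n
    have := hlow n 0 le_rfl 0 le_rfl
    rw [add_zero, hf0 n] at this
    linarith
  -- main convergence result
  have main3 : ∀ t ≥ (0:ℝ), Tendsto (fun n => p n t) atTop (nhds (Real.exp (-t))) := by
    intro t ht
    rcases eq_or_lt_of_le ht with ht0 | htpos
    · -- t = 0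
      rw [← ht0]
      simp only [neg_zero, Real.exp_zero]
      have heq : (fun n => p n 0) = fun _ : ℕ => (1:ℝ) := funext hf0
      rw [heq]
      exact tendsto_const_nhds
    · -- t > 0
      rw [Metric.tendsto_atTop]
      intro δ hδ
      -- choose m
      have hdiv1 : Tendsto (fun m : ℕ => -t + (3 * t + 1) / (m:ℝ)) atTop (𝓝 (-t)) := by
        simpa using tendsto_const_nhds.add (tendsto_const_div_atTop_nhds_zero_nat (3 * t + 1))
      have T1 : Tendsto (fun m : ℕ => Real.exp (-t + (3 * t + 1) / (m:ℝ))) atTop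
          (𝓝 (Real.exp (-t))) := (Real.continuous_exp.tendsto (-t)).comp hdiv1
      have hdiv2 : Tendsto (fun m : ℕ => -t - (2 * t + 3) / (m:ℝ)) atTop (𝓝 (-t)) := by
        simpa [sub_eq_add_neg] using tendsto_const_nhds.add
          ((tendsto_const_div_atTop_nhds_zero_nat (2 * t + 3)).neg)
      have T2 : Tendsto (fun m : ℕ => Real.exp (-t - (2 * t + 3) / (m:ℝ))) atTop
          (𝓝 (Real.exp (-t))) := (Real.continuous_exp.tendsto (-t)).comp hdiv2
      have e1 : ∀ᶠ m : ℕ in atTop, Real.exp (-t + (3 * t + 1) / (m:ℝ))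
          < Real.exp (-t) + δ := T1.eventually_lt_const (by linarith)
      have e2 : ∀ᶠ m : ℕ in atTop, Real.exp (-t) - δ/2
          < Real.exp (-t - (2 * t + 3) / (m:ℝ)) :=
        T2.eventually_const_lt (by linarith)
      have e3 : ∀ᶠ m : ℕ in atTop, 1 / (m:ℝ) ≤ t := by
        have : Tendsto (fun m : ℕ => 1 / (m:ℝ)) atTop (𝓝 0) :=
          tendsto_const_div_atTop_nhds_zero_nat 1
        exact (this.eventually_lt_const htpos).mono fun m hm => hm.le
      have e4 : ∀ᶠ m : ℕ in atTop, 3 ≤ m := eventually_ge_atTop 3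
      obtain ⟨m, hm1, hm2, hm3, hm4⟩ := (e1.and (e2.and (e3.and e4))).exists
      set K : ℕ := ⌈t * m⌉₊ with hK
      -- choose N
      set c : ℝ := min (1 / (m:ℝ) ^ 3) (δ / (2 * ((K:ℝ) + 1))) with hc
      have hm0 : (0:ℝ) < m := by
        have : (3:ℕ) ≤ m := hm4
        positivity
      have hcpos : 0 < c := by
        apply lt_min
        · positivity
        · positivity
      obtain ⟨N, hN⟩ := eventually_atTop.1 (hε.eventually_lt_const hcpos)
      refine ⟨N, fun n hn => ?_⟩
      have hεn : ε n < c := hN n hn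
      have hεn1 : ε n ≤ 1 / (m:ℝ) ^ 3 := hεn.le.trans (min_le_left _ _)
      have hεn2 : ε n ≤ δ / (2 * ((K:ℝ) + 1)) := hεn.le.trans (min_le_right _ _)
      obtain ⟨hup, hlo⟩ := aux_estimate (hrange n) (hmono n) (hsub n) (hint n)
        (hlow n) (hε0 n) htpos hm4 hm3 hεn1
      have hKe : (K:ℝ) * ε n ≤ δ / 2 := by
        have h1 : (K:ℝ) * ε n ≤ ((K:ℝ) + 1) * (δ / (2 * ((K:ℝ) + 1))) := by
          apply mul_le_mul (by linarith) hεn2 (hε0 n) (by positivity)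
        have h2 : ((K:ℝ) + 1) * (δ / (2 * ((K:ℝ) + 1))) = δ / 2 := by
          field_simp
        linarith
      rw [Real.dist_eq, abs_lt]
      constructor
      · -- p n t - exp (-t) > -δ
        have : Real.exp (-t) - δ/2 - δ/2 < p n t := by
          calc Real.exp (-t) - δ/2 - δ/2
              < Real.exp (-t - (2 * t + 3) / m) - δ/2 := by linarith
          _ ≤ Real.exp (-t - (2 * t + 3) / m) - (K:ℝ) * ε n := by linarith
          _ ≤ p n t := hlo
        linarith
      · -- p n t - exp (-t) < δ
        calc p n t - Real.exp (-t) ≤ Real.exp (-t + (3 * t + 1) / m) - Real.exp (-t) := by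
              linarith
        _ < δ := by linarith
  have main2 : Tendsto (fun n => p n 1) atTop (nhds (Real.exp (-1))) := by
    simpa using main3 1 (by norm_num)
  refine ⟨?_, main2, main3⟩
  intro t ht
  have hpow : Tendsto (fun n => (p n 1) ^ t) atTop (𝓝 (Real.exp (-1) ^ t)) :=
    main2.rpow tendsto_const_nhds (Or.inl (Real.exp_pos _).ne')
  have hexp : Real.exp (-1) ^ t = Real.exp (-t) := by
    rw [Real.rpow_def_of_pos (Real.exp_pos _), Real.log_exp]
    ring_nf
  rw [hexp] at hpow
  have := (main3 t ht).sub hpow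
  simpa using this
end
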